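/- arXiv:1109.4661 — 2 statements merged into one kernel-verified Lean document; each statement's English description precedes it below -/
import Mathlib

section
/- Let u_1, u_2 be complex numbers with 2Re(u_1) − Re(u_2) < 0 and Re(u_1) + Re(u_2) < 0. Then the integral ∫_{ℝ^2} (1 + x_2^2)^{(−1 − Re(u_1) + 2Re(u_2))/2} · (1 + x_2^2 + x_3^2)^{(−1 + 2Re(u_1) − Re(u_2))/2} dx_2 dx_3 is finite; consequently the integral X'_{w_4}(u, v, β, t) = ∫_{ℝ^2} e( −v_1 (β_1/(t_1 t_2)) x_1^* − t_1 x_2^* + t_2 x_2' ) (y_1^*)^{1−u_1} (y_2^*)^{1−u_2} dx_2' dx_3' converges absolutely, uniformly in the parameters t_1, t_2 > 0, β_1 > 0, v_1 ∈ {±1}. -/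
open MeasureTheory

/-- e(x) = e^{2πix}. -/
noncomputable def e2pi (x : ℝ) : ℂ := Complex.exp (2 * Real.pi * Complex.I * x)

/-- `x₁*` as a function of `(x₂', x₃')`. -/
noncomputable def xw41 (x : ℝ × ℝ) : ℝ := x.2 / (1 + x.1 ^ 2 + x.2 ^ 2)

/-- `x₂*` as a function of `(x₂', x₃')`. -/
noncomputable def xw42 (x : ℝ × ℝ) : ℝ := -(x.1 * x.2) / (1 + x.1 ^ 2)

/-- `y₁*` as a function of `(x₂', x₃')`. -/
noncomputable def yw41 (x : ℝ × ℝ) : ℝ := Real.sqrt (1 + x.1 ^ 2) / (1 + x.1 ^ 2 + x.2 ^ 2)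

/-- `y₂*` as a function of `(x₂', x₃')`. -/
noncomputable def yw42 (x : ℝ × ℝ) : ℝ := Real.sqrt (1 + x.1 ^ 2 + x.2 ^ 2) / (1 + x.1 ^ 2)

/-- The integrand of `X'_{w₄}(u, v, β, t)`. -/
noncomputable def Xw4F (u₁ u₂ : ℂ) (v₁ β₁ t₁ t₂ : ℝ) (x : ℝ × ℝ) : ℂ :=
  e2pi (-(v₁ * (β₁ / (t₁ * t₂)) * xw41 x) - t₁ * xw42 x + t₂ * x.1) *
    ((yw41 x : ℝ) : ℂ) ^ ((1 : ℂ) - u₁) * ((yw42 x : ℝ) : ℂ) ^ ((1 : ℂ) - u₂)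

/-- The dominating function. -/
noncomputable def Xw4G (u₁ u₂ : ℂ) (x : ℝ × ℝ) : ℝ :=
  (1 + x.1 ^ 2) ^ ((-1 - u₁.re + 2 * u₂.re) / 2) *
    (1 + x.1 ^ 2 + x.2 ^ 2) ^ ((-1 + 2 * u₁.re - u₂.re) / 2)

lemma integrable_one_add_sq (r : ℝ) (hr : r < -(1/2)) :
    Integrable (fun x : ℝ => (1 + x ^ 2) ^ r) := by
  have h : Integrable (fun x : ℝ => ((1:ℝ) + ‖x‖ ^ 2) ^ (-(-2*r) / 2)) :=
    integrable_rpow_neg_one_add_norm_sq (by simp; linarith)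
  convert h using 2 with x
  rw [Real.norm_eq_abs, sq_abs]
  congr 1; ring

lemma rpow_combine (s A : ℝ) (hs : 0 < s) (hA : 0 < A) (a b : ℝ) :
    (Real.sqrt s / A) ^ a * (Real.sqrt A / s) ^ b = s ^ (a / 2 - b) * A ^ (b / 2 - a) := by
  rw [Real.sqrt_eq_rpow, Real.sqrt_eq_rpow,
    Real.div_rpow (Real.rpow_nonneg hs.le _) hA.le,
    Real.div_rpow (Real.rpow_nonneg hA.le _) hs.le,
    ← Real.rpow_mul hs.le, ← Real.rpow_mul hA.le,
    Real.rpow_sub hs, Real.rpow_sub hA,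
    show (1/2*a : ℝ) = a/2 by ring, show (1/2*b : ℝ) = b/2 by ring]
  ring

lemma e2pi_norm (t : ℝ) : ‖e2pi t‖ = 1 := by
  rw [e2pi, Complex.norm_exp]
  norm_num [Complex.mul_re]

lemma norm_F_eq (u₁ u₂ : ℂ) (v₁ β₁ t₁ t₂ : ℝ) (x : ℝ × ℝ) :
    ‖Xw4F u₁ u₂ v₁ β₁ t₁ t₂ x‖ = Xw4G u₁ u₂ x := by
  have hs : (0:ℝ) < 1 + x.1 ^ 2 := by positivity
  have hA : (0:ℝ) < 1 + x.1 ^ 2 + x.2 ^ 2 := by positivity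
  have hy1 : 0 < yw41 x := div_pos (Real.sqrt_pos.2 hs) hA
  have hy2 : 0 < yw42 x := div_pos (Real.sqrt_pos.2 hA) hs
  rw [Xw4F, norm_mul, norm_mul, e2pi_norm, one_mul,
    Complex.norm_cpow_eq_rpow_re_of_pos hy1,
    Complex.norm_cpow_eq_rpow_re_of_pos hy2, yw41, yw42,
    rpow_combine _ _ hs hA, Xw4G]
  congr 1 <;> · congr 1; simp [Complex.sub_re]; ring

lemma dom_le (p q r₂ : ℝ) (hq : q ≤ r₂) (hr : r₂ ≤ 0) (s t : ℝ) :
    (1 + s ^ 2) ^ p * (1 + s ^ 2 + t ^ 2) ^ q ≤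
      (1 + s ^ 2) ^ (p + (q - r₂)) * (1 + t ^ 2) ^ r₂ := by
  have hs : (0:ℝ) < 1 + s ^ 2 := by positivity
  have ht : (0:ℝ) < 1 + t ^ 2 := by positivity
  have hA : (0:ℝ) < 1 + s ^ 2 + t ^ 2 := by positivity
  have h1 : (1 + s ^ 2 + t ^ 2) ^ (q - r₂) ≤ (1 + s ^ 2) ^ (q - r₂) :=
    Real.rpow_le_rpow_of_nonpos hs (by nlinarith) (by linarith)
  have h2 : (1 + s ^ 2 + t ^ 2) ^ r₂ ≤ (1 + t ^ 2) ^ r₂ :=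
    Real.rpow_le_rpow_of_nonpos ht (by nlinarith) hr
  calc (1 + s ^ 2) ^ p * (1 + s ^ 2 + t ^ 2) ^ q
      = (1 + s ^ 2) ^ p * ((1 + s ^ 2 + t ^ 2) ^ (q - r₂) * (1 + s ^ 2 + t ^ 2) ^ r₂) := by
        rw [← Real.rpow_add hA]; ring_nf
    _ ≤ (1 + s ^ 2) ^ p * ((1 + s ^ 2) ^ (q - r₂) * (1 + t ^ 2) ^ r₂) := by
        apply mul_le_mul_of_nonneg_left _ (Real.rpow_nonneg hs.le _)
        exact mul_le_mul h1 h2 (Real.rpow_nonneg hA.le _) (Real.rpow_nonneg hs.le _)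
    _ = (1 + s ^ 2) ^ (p + (q - r₂)) * (1 + t ^ 2) ^ r₂ := by
        rw [Real.rpow_add hs]; ring

lemma contG (u₁ u₂ : ℂ) : Continuous (Xw4G u₁ u₂) := by
  unfold Xw4G
  have c1 : Continuous fun x : ℝ × ℝ => 1 + x.1 ^ 2 := by continuity
  have c2 : Continuous fun x : ℝ × ℝ => 1 + x.1 ^ 2 + x.2 ^ 2 := by continuity
  exact (c1.rpow_const fun x => Or.inl (by positivity)).mul
    (c2.rpow_const fun x => Or.inl (by positivity))

lemma contF (u₁ u₂ : ℂ) (v₁ β₁ t₁ t₂ : ℝ) : Continuous (Xw4F u₁ u₂ v₁ β₁ t₁ t₂) := by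
  have c1 : Continuous fun x : ℝ × ℝ => 1 + x.1 ^ 2 := by continuity
  have c2 : Continuous fun x : ℝ × ℝ => 1 + x.1 ^ 2 + x.2 ^ 2 := by continuity
  have h1 : ∀ x : ℝ × ℝ, (1 + x.1 ^ 2) ≠ 0 := fun x => by positivity
  have h2 : ∀ x : ℝ × ℝ, (1 + x.1 ^ 2 + x.2 ^ 2) ≠ 0 := fun x => by positivity
  have cx1 : Continuous xw41 := (continuous_snd).div c2 h2
  have cx2 : Continuous xw42 := (by continuity : Continuous fun x : ℝ × ℝ => -(x.1 * x.2)).div c1 h1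
  have cy1 : Continuous yw41 := (Real.continuous_sqrt.comp c1).div c2 h2
  have cy2 : Continuous yw42 := (Real.continuous_sqrt.comp c2).div c1 h1
  have ce : Continuous fun x : ℝ × ℝ =>
      e2pi (-(v₁ * (β₁ / (t₁ * t₂)) * xw41 x) - t₁ * xw42 x + t₂ * x.1) := by
    unfold e2pi
    exact Complex.continuous_exp.comp (by
      apply Continuous.mul continuous_const
      exact Complex.continuous_ofReal.comp (by fun_prop))
  have key : ∀ y : ℝ × ℝ → ℝ, Continuous y → (∀ x, 0 < y x) → ∀ c : ℂ,
      Continuous fun x : ℝ × ℝ => ((y x : ℝ) : ℂ) ^ c := by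
    intro y hy hpos c
    rw [continuous_iff_continuousAt]
    intro x
    exact ContinuousAt.cpow ((Complex.continuous_ofReal.comp hy).continuousAt)
      continuousAt_const (by simp [Complex.mem_slitPlane_iff, hpos x])
  exact (ce.mul (key _ cy1 (fun x => div_pos (Real.sqrt_pos.2 (by positivity)) (by positivity)) _)).mul
    (key _ cy2 (fun x => div_pos (Real.sqrt_pos.2 (by positivity)) (by positivity)) _)

/-- Absolute convergence of `X'_{w₄}`, uniformly in the parameters, for
`2 Re u₁ − Re u₂ < 0` and `Re u₁ + Re u₂ < 0`. -/
theorem statement17 (u₁ u₂ : ℂ) (h1 : 2 * u₁.re - u₂.re < 0) (h2 : u₁.re + u₂.re < 0) :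
    Integrable (Xw4G u₁ u₂) ∧
      ∀ v₁ : ℝ, (v₁ = 1 ∨ v₁ = -1) →
        ∀ β₁ t₁ t₂ : ℝ, 0 < β₁ → 0 < t₁ → 0 < t₂ →
          Integrable (Xw4F u₁ u₂ v₁ β₁ t₁ t₂) ∧
            ∀ x : ℝ × ℝ, ‖Xw4F u₁ u₂ v₁ β₁ t₁ t₂ x‖ ≤ Xw4G u₁ u₂ x := by
  set p : ℝ := (-1 - u₁.re + 2 * u₂.re) / 2 with hp
  set q : ℝ := (-1 + 2 * u₁.re - u₂.re) / 2 with hq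
  have hq12 : q < -(1/2) := by rw [hq]; linarith
  have hpq : p + q < -1 := by rw [hp, hq]; linarith
  set r₂ : ℝ := (max q (p + q + 1/2) - 1/2) / 2 with hr2def
  have hm1 : q ≤ max q (p + q + 1/2) := le_max_left _ _
  have hm2 : p + q + 1/2 ≤ max q (p + q + 1/2) := le_max_right _ _
  have hm3 : max q (p + q + 1/2) < -(1/2) := max_lt hq12 (by linarith)
  have hr2q : q ≤ r₂ := by rw [hr2def]; linarith
  have hr2 : r₂ < -(1/2) := by rw [hr2def]; linarith
  have hr1 : p + (q - r₂) < -(1/2) := by rw [hr2def]; linarith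
  have hH : Integrable (fun x : ℝ × ℝ => (1 + x.1 ^ 2) ^ (p + (q - r₂)) * (1 + x.2 ^ 2) ^ r₂) := by
    have := (integrable_one_add_sq _ hr1).mul_prod (integrable_one_add_sq _ hr2)
    rwa [← Measure.volume_eq_prod] at this
  have hG : Integrable (Xw4G u₁ u₂) := by
    refine hH.mono' (contG u₁ u₂).aestronglyMeasurable (ae_of_all _ fun x => ?_)
    rw [Real.norm_eq_abs, abs_of_nonneg (by unfold Xw4G; positivity)]
    exact dom_le p q r₂ hr2q (by linarith) x.1 x.2
  refine ⟨hG, fun v₁ _ β₁ t₁ t₂ _ _ _ => ⟨?_, fun x => le_of_eq (norm_F_eq u₁ u₂ v₁ β₁ t₁ t₂ x)⟩⟩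
  exact hG.mono' (contF u₁ u₂ v₁ β₁ t₁ t₂).aestronglyMeasurable
    (ae_of_all _ fun x => le_of_eq (norm_F_eq u₁ u₂ v₁ β₁ t₁ t₂ x))
end

section
/- Fix p > 1 and complex numbers s_1, s_2 with Re(s_1) < −1/(2p) and Re(s_2) < −(p−1)/(2p). Then there is a constant C = C(s_1, s_2, p) such that for all real x_1, x_2, the integral X_3(x_1, x_2) = ∫_ℝ (1 + x_1^2 + x_3^2)^{s_1} (1 + x_2^2 + (x_3 − x_1 x_2)^2)^{s_2} dx_3 converges absolutely and satisfies |X_3(x_1,x_2)| ≤ C (1 + x_1^2)^{Re(s_1) + 1/(2p)} (1 + x_2^2)^{Re(s_2) + (p−1)/(2p)}. -/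
open MeasureTheory Real

lemma base_integrable {r : ℝ} (hr : r < -(1/2)) :
    Integrable (fun u : ℝ => (1 + u ^ 2) ^ r) := by
  have h2r : (Module.finrank ℝ ℝ : ℝ) < -(2 * r) := by
    simp [Module.finrank_self]; linarith
  have hi : Integrable (fun u : ℝ => (2:ℝ) ^ (-r) * (1 + ‖u‖) ^ (-(-(2*r)))) :=
    (integrable_one_add_norm h2r).const_mul _
  refine hi.mono' ?_ ?_
  · exact ((continuous_const.add (continuous_pow 2)).rpow_const
      (fun t => Or.inl (by simp only [Pi.add_apply]; positivity))).aestronglyMeasurable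
  · refine Filter.Eventually.of_forall fun u => ?_
    have h0 : (0:ℝ) < 1 + u ^ 2 := by positivity
    rw [Real.norm_of_nonneg (Real.rpow_nonneg h0.le _), neg_neg]
    have h1u : (0:ℝ) < 1 + |u| := by positivity
    have hsq : (1 + |u|) ^ (2:ℕ) ≤ 2 * (1 + u ^ 2) := by
      nlinarith [abs_nonneg u, sq_abs u, sq_nonneg (1 - |u|)]
    have key : (2 * (1 + u ^ 2)) ^ r ≤ ((1 + |u|) ^ (2:ℕ)) ^ r :=
      Real.rpow_le_rpow_of_nonpos (by positivity) hsq (by linarith)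
    rw [Real.mul_rpow (by norm_num) h0.le, ← Real.rpow_natCast (1 + |u|) 2,
      ← Real.rpow_mul h1u.le] at key
    have h2 : (0:ℝ) < (2:ℝ) ^ r := by positivity
    rw [Real.rpow_neg (by norm_num : (0:ℝ) ≤ 2)]
    rw [← le_div_iff₀' h2] at key
    calc (1 + u ^ 2) ^ r ≤ (1 + |u|) ^ (((2:ℕ):ℝ) * r) / 2 ^ r := key
      _ = ((2:ℝ) ^ r)⁻¹ * (1 + ‖u‖) ^ (2 * r) := by
          rw [div_eq_inv_mul]; norm_num [Real.norm_eq_abs]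

lemma scaled {r : ℝ} (hr : r < -(1/2)) {B : ℝ} (hB : 0 < B) (c : ℝ) :
    Integrable (fun t : ℝ => (B + (t - c) ^ 2) ^ r) ∧
    ∫ t : ℝ, (B + (t - c) ^ 2) ^ r = B ^ (r + 1/2) * ∫ u : ℝ, (1 + u ^ 2) ^ r := by
  set a := Real.sqrt B with ha_def
  have ha : 0 < a := Real.sqrt_pos.mpr hB
  have ha2 : a ^ 2 = B := Real.sq_sqrt hB.le
  have hpt : ∀ t : ℝ, (B + (t - c) ^ 2) ^ r = B ^ r * (1 + ((t - c) / a) ^ 2) ^ r := by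
    intro t
    have : B + (t - c) ^ 2 = B * (1 + ((t - c) / a) ^ 2) := by
      field_simp; rw [ha2]; ring
    rw [this, Real.mul_rpow hB.le (by positivity)]
  have hint : Integrable (fun t : ℝ => B ^ r * (1 + ((t - c) / a) ^ 2) ^ r) := by
    have h1 : Integrable (fun x : ℝ => (1 + (x / a) ^ 2) ^ r) :=
      (base_integrable hr).comp_div ha.ne'
    exact ((h1.comp_sub_right c).const_mul _)
  constructor
  · exact hint.congr (Filter.Eventually.of_forall fun t => (hpt t).symm)
  · calc ∫ t : ℝ, (B + (t - c) ^ 2) ^ r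
        = ∫ t : ℝ, B ^ r * (1 + ((t - c) / a) ^ 2) ^ r := by
          exact integral_congr_ae (Filter.Eventually.of_forall hpt)
      _ = B ^ r * ∫ t : ℝ, (1 + ((t - c) / a) ^ 2) ^ r := integral_const_mul _ _
      _ = B ^ r * ∫ x : ℝ, (1 + (x / a) ^ 2) ^ r :=
          congrArg (B ^ r * ·) (integral_sub_right_eq_self (fun x => (1 + (x / a) ^ 2) ^ r) c)
      _ = B ^ r * (|a| • ∫ u : ℝ, (1 + u ^ 2) ^ r) := by
          rw [MeasureTheory.Measure.integral_comp_div (fun u : ℝ => (1 + u ^ 2) ^ r) a]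
      _ = B ^ (r + 1/2) * ∫ u : ℝ, (1 + u ^ 2) ^ r := by
          rw [abs_of_pos ha, smul_eq_mul, ← mul_assoc, Real.rpow_add hB,
            ha_def, Real.sqrt_eq_rpow]

/-- Hölder-type bound for the integral `X₃(x₁,x₂)`. -/
theorem statement18 (p : ℝ) (hp : 1 < p) (s₁ s₂ : ℂ)
    (h1 : s₁.re < -(1 / (2 * p))) (h2 : s₂.re < -((p - 1) / (2 * p))) :
    ∃ C : ℝ, ∀ x₁ x₂ : ℝ,
      Integrable (fun x₃ : ℝ =>
          ((1 + x₁ ^ 2 + x₃ ^ 2 : ℝ) : ℂ) ^ s₁ *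
            ((1 + x₂ ^ 2 + (x₃ - x₁ * x₂) ^ 2 : ℝ) : ℂ) ^ s₂) ∧
        ‖(∫ x₃ : ℝ,
            ((1 + x₁ ^ 2 + x₃ ^ 2 : ℝ) : ℂ) ^ s₁ *
              ((1 + x₂ ^ 2 + (x₃ - x₁ * x₂) ^ 2 : ℝ) : ℂ) ^ s₂)‖ ≤
          C * (1 + x₁ ^ 2) ^ (s₁.re + 1 / (2 * p)) *
            (1 + x₂ ^ 2) ^ (s₂.re + (p - 1) / (2 * p)) := by
  have hp0 : (0:ℝ) < p := lt_trans one_pos hp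
  have hp1 : p - 1 ≠ 0 := by linarith
  obtain ⟨q, hpq⟩ : ∃ q, p.HolderConjugate q := ⟨_, Real.HolderConjugate.conjExponent hp⟩
  have hq0 : (0:ℝ) < q := hpq.symm.pos
  have hqval : q = p / (p - 1) := hpq.conjugate_eq
  have hr1 : p * s₁.re < -(1/2) := by
    have := (mul_lt_mul_iff_right₀ hp0).mpr h1
    calc p * s₁.re < p * (-(1 / (2 * p))) := this
      _ = -(1/2) := by field_simp
  have hr2 : q * s₂.re < -(1/2) := by
    have := (mul_lt_mul_iff_right₀ hq0).mpr h2
    calc q * s₂.re < q * (-((p - 1) / (2 * p))) := this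
      _ = -(1/2) := by rw [hqval]; field_simp
  set I₁ := ∫ u : ℝ, (1 + u ^ 2) ^ (p * s₁.re) with hI₁def
  set I₂ := ∫ u : ℝ, (1 + u ^ 2) ^ (q * s₂.re) with hI₂def
  have hI₁ : 0 ≤ I₁ := integral_nonneg fun u => Real.rpow_nonneg (by positivity) _
  have hI₂ : 0 ≤ I₂ := integral_nonneg fun u => Real.rpow_nonneg (by positivity) _
  refine ⟨I₁ ^ (1/p) * I₂ ^ (1/q), fun x₁ x₂ => ?_⟩
  have hB₁ : (0:ℝ) < 1 + x₁ ^ 2 := by positivity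
  have hB₂ : (0:ℝ) < 1 + x₂ ^ 2 := by positivity
  set F := fun t : ℝ => (1 + x₁ ^ 2 + t ^ 2) ^ s₁.re with hFdef
  set G := fun t : ℝ => (1 + x₂ ^ 2 + (t - x₁ * x₂) ^ 2) ^ s₂.re with hGdef
  have hFnn : ∀ t, 0 ≤ F t := fun t => Real.rpow_nonneg (by positivity) _
  have hGnn : ∀ t, 0 ≤ G t := fun t => Real.rpow_nonneg (by positivity) _
  have hFc : Continuous F := (continuous_const.add (continuous_pow 2)).rpow_const
    (fun t => Or.inl (by simp only [Pi.add_apply]; positivity))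
  have hGc : Continuous G := by
    apply Continuous.rpow_const
    · exact continuous_const.add (((continuous_id.sub continuous_const).pow 2))
    · intro t; left; positivity
  have hF1 : ∀ t : ℝ, (0:ℝ) < 1 + x₁ ^ 2 + t ^ 2 := fun t => by positivity
  have hG1 : ∀ t : ℝ, (0:ℝ) < 1 + x₂ ^ 2 + (t - x₁ * x₂) ^ 2 := fun t => by positivity
  -- powers of F and G
  have hFpow : ∀ t : ℝ, F t ^ p = ((1 + x₁ ^ 2) + (t - 0) ^ 2) ^ (p * s₁.re) := by
    intro t
    rw [hFdef, ← Real.rpow_mul (hF1 t).le, mul_comm s₁.re p, sub_zero]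
  have hGpow : ∀ t : ℝ, G t ^ q = ((1 + x₂ ^ 2) + (t - x₁ * x₂) ^ 2) ^ (q * s₂.re) := by
    intro t
    rw [hGdef, ← Real.rpow_mul (hG1 t).le, mul_comm s₂.re q]
  have hSF := scaled hr1 hB₁ 0
  have hSG := scaled hr2 hB₂ (x₁ * x₂)
  -- Memℒp
  have hone : ENNReal.ofReal p ≠ 0 := by
    simp only [ne_eq, ENNReal.ofReal_eq_zero, not_le]; exact hp0
  have hone' : ENNReal.ofReal q ≠ 0 := by
    simp only [ne_eq, ENNReal.ofReal_eq_zero, not_le]; exact hq0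
  have hFp : MemLp F (ENNReal.ofReal p) volume := by
    have hmem : MemLp (fun t => ‖F t‖ ^ (ENNReal.ofReal p).toReal)
        (ENNReal.ofReal p / ENNReal.ofReal p) volume := by
      rw [ENNReal.div_self hone ENNReal.ofReal_ne_top, ENNReal.toReal_ofReal hp0.le,
        memLp_one_iff_integrable]
      refine hSF.1.congr (Filter.Eventually.of_forall fun t => ?_)
      show (1 + x₁ ^ 2 + (t - 0) ^ 2) ^ (p * s₁.re) = ‖F t‖ ^ p
      rw [Real.norm_of_nonneg (hFnn t), hFpow t]
    exact (memLp_norm_rpow_iff hFc.aestronglyMeasurable hone ENNReal.ofReal_ne_top).mp hmem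
  have hGq : MemLp G (ENNReal.ofReal q) volume := by
    have hmem : MemLp (fun t => ‖G t‖ ^ (ENNReal.ofReal q).toReal)
        (ENNReal.ofReal q / ENNReal.ofReal q) volume := by
      rw [ENNReal.div_self hone' ENNReal.ofReal_ne_top, ENNReal.toReal_ofReal hq0.le,
        memLp_one_iff_integrable]
      refine hSG.1.congr (Filter.Eventually.of_forall fun t => ?_)
      show (1 + x₂ ^ 2 + (t - x₁ * x₂) ^ 2) ^ (q * s₂.re) = ‖G t‖ ^ q
      rw [Real.norm_of_nonneg (hGnn t), hGpow t]
    exact (memLp_norm_rpow_iff hGc.aestronglyMeasurable hone' ENNReal.ofReal_ne_top).mp hmem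
  -- product integrable
  have hcond : (1 : ENNReal) / 1 = 1 / ENNReal.ofReal p + 1 / ENNReal.ofReal q := by
    rw [one_div, one_div, one_div, ← ENNReal.ofReal_inv_of_pos hp0,
      ← ENNReal.ofReal_inv_of_pos hq0, ← ENNReal.ofReal_add (by positivity) (by positivity),
      hpq.inv_add_inv_eq_one, ENNReal.ofReal_one, inv_one]
  have hFG : Integrable (fun t : ℝ => F t * G t) := by
    rw [← memLp_one_iff_integrable]
    haveI : ENNReal.HolderTriple (ENNReal.ofReal p) (ENNReal.ofReal q) 1 :=
      ⟨by simpa only [one_div] using hcond.symm⟩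
    exact hGq.smul hFp
  -- the complex integrand
  set H := (fun t : ℝ => ((1 + x₁ ^ 2 + t ^ 2 : ℝ) : ℂ) ^ s₁ *
      ((1 + x₂ ^ 2 + (t - x₁ * x₂) ^ 2 : ℝ) : ℂ) ^ s₂) with hHdef
  have hnormH : ∀ t : ℝ, ‖H t‖ = F t * G t := by
    intro t
    rw [hHdef, norm_mul,
      Complex.norm_cpow_eq_rpow_re_of_pos (hF1 t), Complex.norm_cpow_eq_rpow_re_of_pos (hG1 t)]
  have hHc : Continuous H := by
    apply Continuous.mul
    · apply Continuous.cpow (Complex.continuous_ofReal.comp (by continuity)) continuous_const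
      intro t
      exact Complex.ofReal_mem_slitPlane.mpr (hF1 t)
    · apply Continuous.cpow (Complex.continuous_ofReal.comp (by continuity)) continuous_const
      intro t
      exact Complex.ofReal_mem_slitPlane.mpr (hG1 t)
  have hHint : Integrable H := by
    refine hFG.mono' hHc.aestronglyMeasurable ?_
    exact Filter.Eventually.of_forall fun t => le_of_eq (hnormH t)
  refine ⟨hHint, ?_⟩
  -- the bound
  have habs : ‖∫ t : ℝ, H t‖ ≤ ∫ t : ℝ, F t * G t := by
    refine (norm_integral_le_integral_norm _).trans_eq ?_
    exact integral_congr_ae (Filter.Eventually.of_forall fun t => hnormH t)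
  have hold : ∫ t : ℝ, F t * G t ≤
      (∫ t : ℝ, F t ^ p) ^ (1/p) * (∫ t : ℝ, G t ^ q) ^ (1/q) :=
    integral_mul_le_Lp_mul_Lq_of_nonneg hpq
      (Filter.Eventually.of_forall hFnn) (Filter.Eventually.of_forall hGnn) hFp hGq
  have hFint : ∫ t : ℝ, F t ^ p = (1 + x₁ ^ 2) ^ (p * s₁.re + 1/2) * I₁ := by
    rw [integral_congr_ae (Filter.Eventually.of_forall hFpow), hSF.2]
  have hGint : ∫ t : ℝ, G t ^ q = (1 + x₂ ^ 2) ^ (q * s₂.re + 1/2) * I₂ := by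
    rw [integral_congr_ae (Filter.Eventually.of_forall hGpow), hSG.2]
  have e1 : ((1 + x₁ ^ 2) ^ (p * s₁.re + 1/2) * I₁) ^ (1/p)
      = (1 + x₁ ^ 2) ^ (s₁.re + 1 / (2 * p)) * I₁ ^ (1/p) := by
    rw [Real.mul_rpow (Real.rpow_nonneg hB₁.le _) hI₁, ← Real.rpow_mul hB₁.le]
    congr 2
    field_simp
  have e2 : ((1 + x₂ ^ 2) ^ (q * s₂.re + 1/2) * I₂) ^ (1/q)
      = (1 + x₂ ^ 2) ^ (s₂.re + (p - 1) / (2 * p)) * I₂ ^ (1/q) := by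
    rw [Real.mul_rpow (Real.rpow_nonneg hB₂.le _) hI₂, ← Real.rpow_mul hB₂.le]
    congr 2
    rw [hqval]
    field_simp
  calc ‖∫ t : ℝ, H t‖ ≤ ∫ t : ℝ, F t * G t := habs
    _ ≤ (∫ t : ℝ, F t ^ p) ^ (1/p) * (∫ t : ℝ, G t ^ q) ^ (1/q) := hold
    _ = I₁ ^ (1/p) * I₂ ^ (1/q) * (1 + x₁ ^ 2) ^ (s₁.re + 1 / (2 * p)) *
        (1 + x₂ ^ 2) ^ (s₂.re + (p - 1) / (2 * p)) := by
        rw [hFint, hGint, e1, e2]; ring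
end
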